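/- Let k, l, p, q, α, γ be natural numbers, set n = k + l, and let M11 : Matrix (Fin α) (Fin p), M12 : Matrix (Fin α) (Fin q), M13 : Matrix (Fin α) (Fin n), M22 : Matrix (Fin k) (Fin q), M23 : Matrix (Fin k) (Fin n), M31 : Matrix (Fin γ) (Fin p), M32 : Matrix (Fin γ) (Fin q), C : Matrix (Fin k) (Fin p), M43 : Matrix (Fin n) (Fin n) be matrices over ZMod 2. Let M41 : Matrix (Fin n) (Fin p) be the vertical stack of C on top of the l × p zero matrix. Suppose M43 is invertible, the first k columns of M13 * M43⁻¹ are all zero, and the first k columns of M23 * M43⁻¹ form the k × k identity matrix. Let A be the (α+k+γ+n) × (p+q+n) block matrix with block rows [M11 M12 M13], [0 M22 M23], [M31 M32 0], [M41 0 M43], and let B be the (α+k+γ) × (p+q) block matrix with block rows [M11 M12], [C M22], [M31 M32]. Then Matrix.rank A = Matrix.rank B + n. -/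

import Mathlib

open Matrix Module

section
variable {R : Type*} [CommRing R] {m m' n n' : Type*} [Fintype n] [Fintype n']

theorem aux_rank_reindex (e₁ : m ≃ m') (e₂ : n ≃ n') (A : Matrix m n R) :
    rank (reindex e₁ e₂ A) = rank A := by
  rw [Matrix.rank, Matrix.rank, mulVecLin_reindex, LinearMap.range_comp, LinearMap.range_comp,
    LinearEquiv.range, Submodule.map_top, LinearEquiv.finrank_map_eq]

theorem aux_rank_submatrix (e₁ : m' ≃ m) (e₂ : n' ≃ n) (A : Matrix m n R) :
    rank (A.submatrix e₁ e₂) = rank A := by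
  simpa only [reindex_apply, Equiv.symm_symm] using aux_rank_reindex e₁.symm e₂.symm A

end

section
variable {K : Type*} [Field K]

theorem aux_range_prodMap {M₁ M₂ N₁ N₂ : Type*} [AddCommGroup M₁] [AddCommGroup M₂]
    [AddCommGroup N₁] [AddCommGroup N₂] [Module K M₁] [Module K M₂] [Module K N₁] [Module K N₂]
    (f : M₁ →ₗ[K] N₁) (g : M₂ →ₗ[K] N₂) :
    LinearMap.range (f.prodMap g) = (LinearMap.range f).prod (LinearMap.range g) := by
  ext ⟨x, y⟩
  simp only [LinearMap.mem_range, Submodule.mem_prod, Prod.ext_iff, LinearMap.prodMap_apply]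
  constructor
  · rintro ⟨⟨a, b⟩, h1, h2⟩
    exact ⟨⟨a, h1⟩, ⟨b, h2⟩⟩
  · rintro ⟨⟨a, h1⟩, ⟨b, h2⟩⟩
    exact ⟨⟨a, b⟩, h1, h2⟩

theorem aux_finrank_prod {M₁ M₂ : Type*} [AddCommGroup M₁] [AddCommGroup M₂]
    [Module K M₁] [Module K M₂] [FiniteDimensional K M₁] [FiniteDimensional K M₂]
    (p : Submodule K M₁) (q : Submodule K M₂) :
    finrank K (p.prod q) = finrank K p + finrank K q := by
  rw [LinearMap.prod_eq_sup_map]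
  have h1 : finrank K (p.map (LinearMap.inl K M₁ M₂)) = finrank K p :=
    (Submodule.equivMapOfInjective _ LinearMap.inl_injective p).finrank_eq.symm
  have h2 : finrank K (q.map (LinearMap.inr K M₁ M₂)) = finrank K q :=
    (Submodule.equivMapOfInjective _ LinearMap.inr_injective q).finrank_eq.symm
  have hd : Disjoint (p.map (LinearMap.inl K M₁ M₂)) (q.map (LinearMap.inr K M₁ M₂)) :=
    LinearMap.disjoint_inl_inr.mono LinearMap.map_le_range LinearMap.map_le_range
  rw [← h1, ← h2, ← Submodule.finrank_sup_add_finrank_inf_eq, hd.eq_bot, finrank_bot, add_zero]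

theorem aux_rank_fromBlocks {m n o p' : Type*} [Fintype m] [Fintype n] [Fintype o] [Fintype p']
    [DecidableEq n] [DecidableEq p']
    (A : Matrix m n K) (D : Matrix o p' K) :
    (fromBlocks A 0 0 D).rank = A.rank + D.rank := by
  have hcomp : (fromBlocks A (0 : Matrix m p' K) (0 : Matrix o n K) D).mulVecLin =
      ((LinearEquiv.sumArrowLequivProdArrow m o K K).symm.toLinearMap) ∘ₗ
        ((A.mulVecLin.prodMap D.mulVecLin) ∘ₗ
          (LinearEquiv.sumArrowLequivProdArrow n p' K K).toLinearMap) := by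
    apply LinearMap.ext; intro v; funext i
    cases i <;>
      simp [Matrix.fromBlocks_mulVec, LinearEquiv.sumArrowLequivProdArrow,
        Equiv.sumArrowEquivProdArrow, Function.comp]
  rw [Matrix.rank, hcomp, LinearMap.range_comp, LinearMap.range_comp_of_range_eq_top _
      (LinearMap.range_eq_top.mpr (LinearEquiv.sumArrowLequivProdArrow n p' K K).surjective),
    aux_range_prodMap, LinearEquiv.finrank_map_eq, aux_finrank_prod, Matrix.rank, Matrix.rank]

end

/-- The block-elimination step actually verified in the proof of the main theorem,
with `M41` the vertical stack of `C` on top of a zero matrix, the first `k` columns of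
`M13 * M43⁻¹` zero and the first `k` columns of `M23 * M43⁻¹` the identity. -/
theorem stmt_2 (k l p q α γ : ℕ)
    (M11 : Matrix (Fin α) (Fin p) (ZMod 2)) (M12 : Matrix (Fin α) (Fin q) (ZMod 2))
    (M13 : Matrix (Fin α) (Fin k ⊕ Fin l) (ZMod 2))
    (M22 : Matrix (Fin k) (Fin q) (ZMod 2))
    (M23 : Matrix (Fin k) (Fin k ⊕ Fin l) (ZMod 2))
    (M31 : Matrix (Fin γ) (Fin p) (ZMod 2)) (M32 : Matrix (Fin γ) (Fin q) (ZMod 2))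
    (C : Matrix (Fin k) (Fin p) (ZMod 2))
    (M43 : Matrix (Fin k ⊕ Fin l) (Fin k ⊕ Fin l) (ZMod 2))
    (hM43 : IsUnit M43)
    (h13 : (M13 * M43⁻¹).submatrix id Sum.inl = 0)
    (h23 : (M23 * M43⁻¹).submatrix id Sum.inl = (1 : Matrix (Fin k) (Fin k) (ZMod 2))) :
    Matrix.rank
      (Matrix.fromRows
        (Matrix.fromRows
          (Matrix.fromCols (Matrix.fromCols M11 M12) M13)
          (Matrix.fromCols (Matrix.fromCols 0 M22) M23))
        (Matrix.fromRows
          (Matrix.fromCols (Matrix.fromCols M31 M32) 0)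
          (Matrix.fromCols (Matrix.fromCols (Matrix.fromRows C 0) 0) M43))) =
    Matrix.rank
      (Matrix.fromRows
        (Matrix.fromRows
          (Matrix.fromCols M11 M12)
          (Matrix.fromCols C M22))
        (Matrix.fromCols M31 M32)) + (k + l) := by
  have hdet : IsUnit M43.det := (Matrix.isUnit_iff_isUnit_det M43).mp hM43
  -- notation
  set nnC := Fin p ⊕ Fin q with hnnC
  set Bmat : Matrix ((Fin α ⊕ Fin k) ⊕ Fin γ) (Fin p ⊕ Fin q) (ZMod 2) :=
    Matrix.fromRows
      (Matrix.fromRows (Matrix.fromCols M11 M12) (Matrix.fromCols C M22))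
      (Matrix.fromCols M31 M32) with hBmat
  set Dmat : Matrix ((Fin α ⊕ Fin k) ⊕ Fin γ) (Fin k ⊕ Fin l) (ZMod 2) :=
    Matrix.fromRows (Matrix.fromRows (M13 * M43⁻¹) (M23 * M43⁻¹))
      (0 : Matrix (Fin γ) (Fin k ⊕ Fin l) (ZMod 2)) with hDmat
  set Zmat : Matrix (Fin k ⊕ Fin l) (Fin p ⊕ Fin q) (ZMod 2) :=
    Matrix.fromCols (Matrix.fromRows C (0 : Matrix (Fin l) (Fin p) (ZMod 2)))
      (0 : Matrix (Fin k ⊕ Fin l) (Fin q) (ZMod 2)) with hZmat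
  -- column facts
  have h13' : (M13 * M43⁻¹).toCols₁ = 0 := by
    ext i j; simpa using congrFun (congrFun h13 i) j
  have h23' : (M23 * M43⁻¹).toCols₁ = 1 := by
    ext i j; simpa using congrFun (congrFun h23 i) j
  have hD1M : (M13 * M43⁻¹) * Matrix.fromRows C (0 : Matrix (Fin l) (Fin p) (ZMod 2)) = 0 := by
    conv_lhs => rw [← Matrix.fromCols_toCols (M13 * M43⁻¹)]
    rw [Matrix.fromCols_mul_fromRows, h13']
    simp
  have hD2M : (M23 * M43⁻¹) * Matrix.fromRows C (0 : Matrix (Fin l) (Fin p) (ZMod 2)) = C := by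
    conv_lhs => rw [← Matrix.fromCols_toCols (M23 * M43⁻¹)]
    rw [Matrix.fromCols_mul_fromRows, h23']
    simp
  have hD1c : M13 * M43⁻¹ * M43 = M13 := Matrix.nonsing_inv_mul_cancel_right M43 M13 hdet
  have hD2c : M23 * M43⁻¹ * M43 = M23 := Matrix.nonsing_inv_mul_cancel_right M43 M23 hdet
  -- the product of the three block matrices
  have hprod :
      Matrix.fromBlocks (1 : Matrix ((Fin α ⊕ Fin k) ⊕ Fin γ) ((Fin α ⊕ Fin k) ⊕ Fin γ) (ZMod 2)) Dmat 0
        (1 : Matrix (Fin k ⊕ Fin l) (Fin k ⊕ Fin l) (ZMod 2)) *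
        Matrix.fromBlocks Bmat 0 0 (1 : Matrix (Fin k ⊕ Fin l) (Fin k ⊕ Fin l) (ZMod 2)) *
        Matrix.fromBlocks (1 : Matrix (Fin p ⊕ Fin q) (Fin p ⊕ Fin q) (ZMod 2)) 0 Zmat M43 =
      Matrix.fromBlocks (Bmat + Dmat * Zmat) (Dmat * M43) Zmat M43 := by
    rw [Matrix.fromBlocks_multiply, Matrix.fromBlocks_multiply]
    simp
  have hDZ : Dmat * Zmat =
      Matrix.fromRows
        (Matrix.fromRows (Matrix.fromCols 0 0) (Matrix.fromCols C 0))
        (0 : Matrix (Fin γ) (Fin p ⊕ Fin q) (ZMod 2)) := by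
    rw [hDmat, hZmat, Matrix.fromRows_mul, Matrix.fromRows_mul, Matrix.mul_fromCols,
      Matrix.mul_fromCols, hD1M, hD2M]
    simp
  have hDM : Dmat * M43 = Matrix.fromRows (Matrix.fromRows M13 M23)
      (0 : Matrix (Fin γ) (Fin k ⊕ Fin l) (ZMod 2)) := by
    rw [hDmat, Matrix.fromRows_mul, Matrix.fromRows_mul, hD1c, hD2c]
    simp
  -- the key identity
  have key :
      (Matrix.fromRows
        (Matrix.fromRows
          (Matrix.fromCols (Matrix.fromCols M11 M12) M13)
          (Matrix.fromCols (Matrix.fromCols 0 M22) M23))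
        (Matrix.fromRows
          (Matrix.fromCols (Matrix.fromCols M31 M32) 0)
          (Matrix.fromCols (Matrix.fromCols (Matrix.fromRows C 0) 0) M43))).submatrix
        (Equiv.sumAssoc (Fin α ⊕ Fin k) (Fin γ) (Fin k ⊕ Fin l))
        (Equiv.refl ((Fin p ⊕ Fin q) ⊕ (Fin k ⊕ Fin l))) =
      Matrix.fromBlocks (1 : Matrix ((Fin α ⊕ Fin k) ⊕ Fin γ) ((Fin α ⊕ Fin k) ⊕ Fin γ) (ZMod 2)) Dmat 0
        (1 : Matrix (Fin k ⊕ Fin l) (Fin k ⊕ Fin l) (ZMod 2)) *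
        Matrix.fromBlocks Bmat 0 0 (1 : Matrix (Fin k ⊕ Fin l) (Fin k ⊕ Fin l) (ZMod 2)) *
        Matrix.fromBlocks (1 : Matrix (Fin p ⊕ Fin q) (Fin p ⊕ Fin q) (ZMod 2)) 0 Zmat M43 := by
    rw [hprod, hDZ, hDM, hBmat, hZmat]
    ext i j
    rcases i with ((a | b) | c) | d <;> rcases j with (e' | f) | g <;>
      simp [Matrix.add_apply, Equiv.sumAssoc, CharTwo.add_self_eq_zero]
  -- determinants of the outer factors
  have hdetL : IsUnit (Matrix.fromBlocks (1 : Matrix ((Fin α ⊕ Fin k) ⊕ Fin γ) _ (ZMod 2))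
      Dmat 0 1).det := by
    rw [Matrix.det_fromBlocks_zero₂₁]
    simp
  have hdetR : IsUnit (Matrix.fromBlocks
      (1 : Matrix (Fin p ⊕ Fin q) (Fin p ⊕ Fin q) (ZMod 2)) 0 Zmat M43).det := by
    rw [Matrix.det_fromBlocks_zero₁₂]
    simpa using hdet
  calc
    Matrix.rank
      (Matrix.fromRows
        (Matrix.fromRows
          (Matrix.fromCols (Matrix.fromCols M11 M12) M13)
          (Matrix.fromCols (Matrix.fromCols 0 M22) M23))
        (Matrix.fromRows
          (Matrix.fromCols (Matrix.fromCols M31 M32) 0)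
          (Matrix.fromCols (Matrix.fromCols (Matrix.fromRows C 0) 0) M43)))
      = Matrix.rank ((Matrix.fromRows
        (Matrix.fromRows
          (Matrix.fromCols (Matrix.fromCols M11 M12) M13)
          (Matrix.fromCols (Matrix.fromCols 0 M22) M23))
        (Matrix.fromRows
          (Matrix.fromCols (Matrix.fromCols M31 M32) 0)
          (Matrix.fromCols (Matrix.fromCols (Matrix.fromRows C 0) 0) M43))).submatrix
        (Equiv.sumAssoc (Fin α ⊕ Fin k) (Fin γ) (Fin k ⊕ Fin l))
        (Equiv.refl ((Fin p ⊕ Fin q) ⊕ (Fin k ⊕ Fin l)))) :=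
      (aux_rank_submatrix _ _ _).symm
    _ = Matrix.rank (Matrix.fromBlocks Bmat 0 0
        (1 : Matrix (Fin k ⊕ Fin l) (Fin k ⊕ Fin l) (ZMod 2))) := by
      rw [key, Matrix.rank_mul_eq_left_of_isUnit_det _ _ hdetR,
        Matrix.rank_mul_eq_right_of_isUnit_det _ _ hdetL]
    _ = Matrix.rank Bmat + (k + l) := by
      rw [aux_rank_fromBlocks, Matrix.rank_one]
      simp
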